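/- There is a universal constant C > 0 such that for every number of agents n, every profile u of unit-range valuations, and every pure Nash equilibrium s of Probabilistic Serial at u, SW_OPT(u) ≤ C·√n·SW_PS(u,s); i.e., the pure Price of Anarchy of Probabilistic Serial is O(√n) under the unit-range representation. -/

import Mathlib

/-- A unit-sum valuation over `n` items. -/
def UnitSum {n : ℕ} (v : Fin n → ℝ) : Prop :=
  (∀ j, 0 ≤ v j) ∧ ∑ j, v j = 1

/-- A unit-range valuation over `n` items. -/
def UnitRange {n : ℕ} (v : Fin n → ℝ) : Prop :=
  (∀ j, 0 ≤ v j ∧ v j ≤ 1) ∧ (∃ j, v j = 1) ∧ (∃ j, v j = 0)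

/-- The optimal social welfare: the maximum over matchings (permutations of the
items) of the total utility. -/
noncomputable def SWopt {n : ℕ} (u : Fin n → Fin n → ℝ) : ℝ :=
  Finset.univ.sup' ⟨Equiv.refl (Fin n), Finset.mem_univ _⟩
    (fun μ : Equiv.Perm (Fin n) => ∑ i, u i (μ i))
/-- The state of the Probabilistic Serial eating process: `rem j` is the remaining
amount of item `j`, `cons i j` the amount of item `j` eaten so far by agent `i`,
`time` the current time, and `fin j` the time at which item `j` was fully consumed. -/
structure PSState (n : ℕ) where
  rem : Fin n → ℝ
  cons : Fin n → Fin n → ℝ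
  time : ℝ
  fin : Fin n → ℝ

open Classical in
/-- One phase of the Probabilistic Serial eating process: while some item remains,
every agent eats at rate 1 from her most preferred remaining item (preference
orderings are given as bijections from ranks to items, rank `0` being the most
preferred); the phase lasts until the first moment a currently eaten item is
exhausted. -/
noncomputable def psStep {n : ℕ} (s : Fin n → (Fin n ≃ Fin n)) (st : PSState n) :
    PSState n :=
  let avail : Finset (Fin n) := Finset.univ.filter (fun j => 0 < st.rem j)
  if h : avail.Nonempty then
    -- the most preferred still-available item of each agent
    let top : Fin n → Fin n := fun i =>
      let R : Finset (Fin n) := Finset.univ.filter (fun r => s i r ∈ avail)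
      if hR : R.Nonempty then s i (R.min' hR) else h.choose
    -- the number of agents currently eating item `j`
    let rate : Fin n → ℕ := fun j => (Finset.univ.filter (fun i => top i = j)).card
    -- the duration of the phase: first time an eaten item is exhausted
    let Δ : ℝ := sInf {x : ℝ | ∃ j ∈ avail, 0 < rate j ∧ x = st.rem j / (rate j : ℝ)}
    { rem := fun j => st.rem j - (rate j : ℝ) * Δ
      cons := fun i j => st.cons i j + (if top i = j then Δ else 0)
      time := st.time + Δ
      fin := fun j =>
        if 0 < st.rem j ∧ st.rem j - (rate j : ℝ) * Δ ≤ 0 then st.time + Δ else st.fin j }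
  else st

/-- The final state of the Probabilistic Serial eating process (there are at most
`n` phases, since in each phase at least one item is exhausted). -/
noncomputable def psFinal {n : ℕ} (s : Fin n → (Fin n ≃ Fin n)) : PSState n :=
  (psStep s)^[n] ⟨fun _ => 1, fun _ _ => 0, 0, fun _ => 1⟩

/-- `psProb s i j` is the probability that agent `i` receives item `j` under
Probabilistic Serial at report profile `s`, i.e. the amount of item `j` eaten by
agent `i`. -/
noncomputable def psProb {n : ℕ} (s : Fin n → (Fin n ≃ Fin n)) (i j : Fin n) : ℝ :=
  (psFinal s).cons i j

/-- `psTime s j` is the time at which item `j` is fully consumed under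
Probabilistic Serial at report profile `s`. -/
noncomputable def psTime {n : ℕ} (s : Fin n → (Fin n ≃ Fin n)) (j : Fin n) : ℝ :=
  (psFinal s).fin j

/-- The expected social welfare of Probabilistic Serial at report profile `s`
under true valuation profile `u`. -/
noncomputable def psSW {n : ℕ} (u : Fin n → Fin n → ℝ) (s : Fin n → (Fin n ≃ Fin n)) : ℝ :=
  ∑ i, ∑ j, psProb s i j * u i j

/-- `s` is a pure Nash equilibrium of Probabilistic Serial at true valuation
profile `u`: no agent can strictly increase her expected utility by unilaterally
reporting a different ordering. -/
def PSNash {n : ℕ} (u : Fin n → Fin n → ℝ) (s : Fin n → (Fin n ≃ Fin n)) : Prop :=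
  ∀ (i : Fin n) (s' : Fin n ≃ Fin n),
    ∑ j, psProb (Function.update s i s') i j * u i j ≤ ∑ j, psProb s i j * u i j

namespace PSdev

open Classical Finset

variable {n : ℕ} (s : Fin n → (Fin n ≃ Fin n)) (st : PSState n)

open Classical in
noncomputable def availF (st : PSState n) : Finset (Fin n) :=
  Finset.univ.filter (fun j => 0 < st.rem j)

open Classical in
noncomputable def topF (h : (availF st).Nonempty) : Fin n → Fin n := fun i =>
  let R : Finset (Fin n) := Finset.univ.filter (fun r => s i r ∈ availF st)
  if hR : R.Nonempty then s i (R.min' hR) else h.choose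

open Classical in
noncomputable def rateF (h : (availF st).Nonempty) : Fin n → ℕ := fun j =>
  (Finset.univ.filter (fun i => topF s st h i = j)).card

open Classical in
noncomputable def delF (h : (availF st).Nonempty) : ℝ :=
  sInf {x : ℝ | ∃ j ∈ availF st, 0 < rateF s st h j ∧ x = st.rem j / (rateF s st h j : ℝ)}

open Classical in
lemma psStep_eq (h : (availF st).Nonempty) :
    psStep s st =
      { rem := fun j => st.rem j - (rateF s st h j : ℝ) * delF s st h
        cons := fun i j => st.cons i j + (if topF s st h i = j then delF s st h else 0)
        time := st.time + delF s st h
        fin := fun j =>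
          if 0 < st.rem j ∧ st.rem j - (rateF s st h j : ℝ) * delF s st h ≤ 0 then
            st.time + delF s st h
          else st.fin j } := by
  have h' : (Finset.univ.filter (fun j => 0 < st.rem j)).Nonempty := h
  rw [psStep, dif_pos h']
  rfl

lemma psStep_frozen (h : ¬ (availF st).Nonempty) : psStep s st = st := by
  have h' : ¬ (Finset.univ.filter (fun j => 0 < st.rem j)).Nonempty := h
  rw [psStep, dif_neg h']


section
variable (h : (availF st).Nonempty)

lemma mem_availF {j : Fin n} : j ∈ availF st ↔ 0 < st.rem j := by
  simp [availF]

lemma topF_spec (i : Fin n) :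
    topF s st h i ∈ availF st ∧
      ∀ j ∈ availF st, (s i).symm (topF s st h i) ≤ (s i).symm j := by
  obtain ⟨j0, hj0⟩ := id h
  have hR : (Finset.univ.filter (fun r => s i r ∈ availF st)).Nonempty :=
    ⟨(s i).symm j0, by simp [hj0]⟩
  have htop : topF s st h i = s i ((Finset.univ.filter (fun r => s i r ∈ availF st)).min'
      hR) := by
    rw [topF, dif_pos hR]
  constructor
  · rw [htop]
    have := Finset.min'_mem _ hR
    simpa using this
  · intro j hj
    rw [htop, Equiv.symm_apply_apply]
    exact Finset.min'_le _ _ (by simpa using hj)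

lemma topF_eq (i j : Fin n) (hj : j ∈ availF st)
    (hbest : ∀ j' ∈ availF st, (s i).symm j ≤ (s i).symm j') : topF s st h i = j := by
  obtain ⟨hmem, hmin⟩ := topF_spec s st h i
  have h1 : (s i).symm (topF s st h i) ≤ (s i).symm j := hmin j hj
  have h2 : (s i).symm j ≤ (s i).symm (topF s st h i) := hbest _ hmem
  have := le_antisymm h1 h2
  have := congrArg (s i) this
  simpa using this

lemma rateF_pos_top (i : Fin n) : 0 < rateF s st h (topF s st h i) := by
  rw [rateF]
  exact Finset.card_pos.2 ⟨i, by simp⟩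

lemma rateF_le (j : Fin n) : rateF s st h j ≤ n := by
  rw [rateF]
  calc (Finset.univ.filter (fun i => topF s st h i = j)).card
      ≤ (Finset.univ : Finset (Fin n)).card := Finset.card_le_card (Finset.filter_subset _ _)
    _ = n := by simp

lemma rateF_eq_zero (j : Fin n) (hj : j ∉ availF st) : rateF s st h j = 0 := by
  rw [rateF, Finset.card_eq_zero, Finset.filter_eq_empty_iff]
  intro i _ hi
  exact hj (hi ▸ (topF_spec s st h i).1)

open Classical in
lemma delF_set_eq :
    {x : ℝ | ∃ j ∈ availF st, 0 < rateF s st h j ∧ x = st.rem j / (rateF s st h j : ℝ)} =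
      ↑(((availF st).filter (fun j => 0 < rateF s st h j)).image
        (fun j => st.rem j / (rateF s st h j : ℝ))) := by
  ext x
  simp only [Set.mem_setOf_eq, Finset.coe_image, Set.mem_image, Finset.mem_coe,
    Finset.mem_filter]
  constructor
  · rintro ⟨j, hj, hr, rfl⟩; exact ⟨j, ⟨hj, hr⟩, rfl⟩
  · rintro ⟨j, ⟨hj, hr⟩, rfl⟩; exact ⟨j, hj, hr, rfl⟩

open Classical in
lemma delF_set_nonempty :
    {x : ℝ | ∃ j ∈ availF st, 0 < rateF s st h j ∧
      x = st.rem j / (rateF s st h j : ℝ)}.Nonempty := by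
  obtain ⟨j0, hj0⟩ := id h
  refine ⟨st.rem (topF s st h j0) / (rateF s st h (topF s st h j0) : ℝ),
    topF s st h j0, (topF_spec s st h j0).1, rateF_pos_top s st h j0, rfl⟩

open Classical in
lemma delF_mem : ∃ j ∈ availF st, 0 < rateF s st h j ∧
    delF s st h = st.rem j / (rateF s st h j : ℝ) := by
  have hfin : {x : ℝ | ∃ j ∈ availF st, 0 < rateF s st h j ∧
      x = st.rem j / (rateF s st h j : ℝ)}.Finite := by
    rw [delF_set_eq]; exact (Finset.finite_toSet _)
  exact (delF_set_nonempty s st h).csInf_mem hfin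

open Classical in
lemma delF_le (j : Fin n) (hj : j ∈ availF st) (hr : 0 < rateF s st h j) :
    delF s st h ≤ st.rem j / (rateF s st h j : ℝ) := by
  have hfin : {x : ℝ | ∃ j ∈ availF st, 0 < rateF s st h j ∧
      x = st.rem j / (rateF s st h j : ℝ)}.Finite := by
    rw [delF_set_eq]; exact (Finset.finite_toSet _)
  exact csInf_le hfin.bddBelow ⟨j, hj, hr, rfl⟩

lemma delF_pos : 0 < delF s st h := by
  obtain ⟨j, hj, hr, heq⟩ := delF_mem s st h
  rw [heq]
  exact div_pos ((mem_availF st).1 hj) (by exact_mod_cast hr)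

lemma rem_psStep (j : Fin n) :
    (psStep s st).rem j = st.rem j - (rateF s st h j : ℝ) * delF s st h := by
  rw [psStep_eq s st h]

lemma cons_psStep (i j : Fin n) :
    (psStep s st).cons i j = st.cons i j +
      (if topF s st h i = j then delF s st h else 0) := by
  rw [psStep_eq s st h]

lemma time_psStep : (psStep s st).time = st.time + delF s st h := by
  rw [psStep_eq s st h]

lemma rate_mul_del_le (j : Fin n) (hrem : 0 ≤ st.rem j) :
    (rateF s st h j : ℝ) * delF s st h ≤ st.rem j := by
  by_cases hj : j ∈ availF st
  · by_cases hr : 0 < rateF s st h j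
    · have := delF_le s st h j hj hr
      have hrpos : (0:ℝ) < (rateF s st h j : ℝ) := by exact_mod_cast hr
      calc (rateF s st h j : ℝ) * delF s st h
          ≤ (rateF s st h j : ℝ) * (st.rem j / (rateF s st h j : ℝ)) := by
            exact mul_le_mul_of_nonneg_left this (le_of_lt hrpos)
        _ = st.rem j := by field_simp
    · have : rateF s st h j = 0 := Nat.eq_zero_of_not_pos hr
      simp [this, hrem]
  · have : rateF s st h j = 0 := rateF_eq_zero s st h j hj
    simp [this, hrem]

end

def Inv (st : PSState n) : Prop :=
  (∀ j, 0 ≤ st.rem j) ∧ (∀ i j, 0 ≤ st.cons i j) ∧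
    (∀ j, st.rem j = 1 - ∑ i, st.cons i j) ∧ (∀ i, ∑ j, st.cons i j = st.time) ∧
    0 ≤ st.time

lemma sum_ite_top (h : (availF st).Nonempty) (i : Fin n) :
    ∑ j, (if topF s st h i = j then delF s st h else 0) = delF s st h := by
  simp [Finset.sum_ite_eq]

lemma sum_agents_ite (h : (availF st).Nonempty) (j : Fin n) :
    ∑ i, (if topF s st h i = j then delF s st h else 0)
      = (rateF s st h j : ℝ) * delF s st h := by
  rw [Finset.sum_ite, Finset.sum_const_zero, add_zero, Finset.sum_const, rateF,
    nsmul_eq_mul]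

lemma inv_psStep (hInv : Inv st) : Inv (psStep s st) := by
  by_cases h : (availF st).Nonempty
  · obtain ⟨hrem, hcons, hbal, hagent, htime⟩ := hInv
    refine ⟨?_, ?_, ?_, ?_, ?_⟩
    · intro j
      rw [rem_psStep s st h, sub_nonneg]
      exact rate_mul_del_le s st h j (hrem j)
    · intro i j
      rw [cons_psStep s st h]
      refine add_nonneg (hcons i j) ?_
      split
      · exact (delF_pos s st h).le
      · exact le_refl 0
    · intro j
      rw [rem_psStep s st h]
      have : ∑ i, (psStep s st).cons i j
          = (∑ i, st.cons i j) + (rateF s st h j : ℝ) * delF s st h := by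
        simp only [cons_psStep s st h]
        rw [Finset.sum_add_distrib, sum_agents_ite s st h j]
      rw [this, hbal j]
      ring
    · intro i
      have : ∑ j, (psStep s st).cons i j = (∑ j, st.cons i j) + delF s st h := by
        simp only [cons_psStep s st h]
        rw [Finset.sum_add_distrib, sum_ite_top s st h i]
      rw [this, hagent i, time_psStep s st h]
    · rw [time_psStep s st h]
      exact add_nonneg htime (delF_pos s st h).le
  · rw [psStep_frozen s st h]; exact hInv

lemma rem_psStep_le (j : Fin n) : (psStep s st).rem j ≤ st.rem j := by
  by_cases h : (availF st).Nonempty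
  · rw [rem_psStep s st h]
    have : 0 ≤ (rateF s st h j : ℝ) * delF s st h :=
      mul_nonneg (Nat.cast_nonneg _) (delF_pos s st h).le
    linarith
  · rw [psStep_frozen s st h]

lemma cons_psStep_ge (i j : Fin n) : st.cons i j ≤ (psStep s st).cons i j := by
  by_cases h : (availF st).Nonempty
  · rw [cons_psStep s st h]
    have : (0:ℝ) ≤ if topF s st h i = j then delF s st h else 0 := by
      split
      · exact (delF_pos s st h).le
      · exact le_refl 0
    linarith
  · rw [psStep_frozen s st h]

lemma time_psStep_ge : st.time ≤ (psStep s st).time := by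
  by_cases h : (availF st).Nonempty
  · rw [time_psStep s st h]
    linarith [delF_pos s st h]
  · rw [psStep_frozen s st h]

lemma cons_incr_le_time_incr (i j : Fin n) :
    (psStep s st).cons i j - st.cons i j ≤ (psStep s st).time - st.time := by
  by_cases h : (availF st).Nonempty
  · rw [cons_psStep s st h, time_psStep s st h]
    have : (if topF s st h i = j then delF s st h else 0) ≤ delF s st h := by
      split
      · exact le_refl _
      · exact (delF_pos s st h).le
    linarith
  · rw [psStep_frozen s st h]; simp

lemma cons_psStep_of_not_avail (i j : Fin n) (hj : j ∉ availF st) :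
    (psStep s st).cons i j = st.cons i j := by
  by_cases h : (availF st).Nonempty
  · rw [cons_psStep s st h, if_neg, add_zero]
    intro htop
    exact hj (htop ▸ (topF_spec s st h i).1)
  · rw [psStep_frozen s st h]

noncomputable def initState (n : ℕ) : PSState n := ⟨fun _ => 1, fun _ _ => 0, 0, fun _ => 1⟩

noncomputable def stt (s : Fin n → (Fin n ≃ Fin n)) (k : ℕ) : PSState n :=
  (psStep s)^[k] (initState n)

lemma stt_zero : stt s 0 = initState n := rfl

lemma stt_succ (k : ℕ) : stt s (k + 1) = psStep s (stt s k) :=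
  Function.iterate_succ_apply' _ _ _

lemma inv_stt (k : ℕ) : Inv (stt s k) := by
  induction k with
  | zero =>
    refine ⟨?_, ?_, ?_, ?_, le_refl 0⟩ <;> intros <;> simp [stt_zero, initState]
  | succ k ih =>
    rw [stt_succ]
    exact inv_psStep s _ ih

lemma rem_mono {k l : ℕ} (hkl : k ≤ l) (j : Fin n) :
    (stt s l).rem j ≤ (stt s k).rem j := by
  induction l with
  | zero => simp_all
  | succ l ih =>
    rcases Nat.lt_or_ge k (l+1) with hl | hl
    · rw [stt_succ]
      exact le_trans (rem_psStep_le s _ j) (ih (Nat.lt_succ_iff.1 hl))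
    · have : k = l + 1 := le_antisymm hkl hl
      subst this; exact le_rfl

lemma cons_mono {k l : ℕ} (hkl : k ≤ l) (i j : Fin n) :
    (stt s k).cons i j ≤ (stt s l).cons i j := by
  induction l with
  | zero => simp_all
  | succ l ih =>
    rcases Nat.lt_or_ge k (l+1) with hl | hl
    · rw [stt_succ]
      exact le_trans (ih (Nat.lt_succ_iff.1 hl)) (cons_psStep_ge s _ i j)
    · have : k = l + 1 := le_antisymm hkl hl
      subst this; exact le_rfl

lemma time_mono {k l : ℕ} (hkl : k ≤ l) : (stt s k).time ≤ (stt s l).time := by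
  induction l with
  | zero => simp_all
  | succ l ih =>
    rcases Nat.lt_or_ge k (l+1) with hl | hl
    · rw [stt_succ]
      exact le_trans (ih (Nat.lt_succ_iff.1 hl)) (time_psStep_ge s _)
    · have : k = l + 1 := le_antisymm hkl hl
      subst this; exact le_rfl

lemma cons_sub_le_time_sub {k l : ℕ} (hkl : k ≤ l) (i j : Fin n) :
    (stt s l).cons i j - (stt s k).cons i j ≤ (stt s l).time - (stt s k).time := by
  induction l with
  | zero =>
    have : k = 0 := Nat.le_zero.1 hkl
    subst this; simp
  | succ l ih =>
    rcases Nat.lt_or_ge k (l+1) with hl | hl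
    · have h1 := ih (Nat.lt_succ_iff.1 hl)
      have h2 := cons_incr_le_time_incr s (stt s l) i j
      rw [← stt_succ] at h2
      linarith
    · have : k = l + 1 := le_antisymm hkl hl
      subst this; simp

lemma avail_card (k : ℕ) :
    availF (stt s k) = ∅ ∨ (availF (stt s k)).card + k ≤ n := by
  induction k with
  | zero =>
    right
    simpa [availF] using Finset.card_le_card (Finset.filter_subset _ (Finset.univ : Finset (Fin n)))
  | succ k ih =>
    by_cases h : (availF (stt s k)).Nonempty
    · right
      rcases ih with hemp | hcard
      · exact absurd (hemp ▸ h) (by simp)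
      have hsub : availF (stt s (k+1)) ⊆ availF (stt s k) := by
        intro j hj
        rw [mem_availF] at hj ⊢
        calc (0:ℝ) < (stt s (k+1)).rem j := hj
          _ ≤ (stt s k).rem j := by rw [stt_succ]; exact rem_psStep_le s _ j
      obtain ⟨j0, hj0, hr0, heq⟩ := delF_mem s (stt s k) h
      have hj0' : j0 ∉ availF (stt s (k+1)) := by
        rw [mem_availF, stt_succ, rem_psStep s _ h, heq]
        have hrpos : (0:ℝ) < (rateF s (stt s k) h j0 : ℝ) := by exact_mod_cast hr0
        rw [mul_div_cancel₀ _ (ne_of_gt hrpos)]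
        simp
      have hss : availF (stt s (k+1)) ⊂ availF (stt s k) :=
        ⟨hsub, fun hsub' => hj0' (hsub' hj0)⟩
      have := Finset.card_lt_card hss
      omega
    · left
      rw [Finset.not_nonempty_iff_eq_empty] at h
      rw [stt_succ, psStep_frozen s _ (by rw [h]; simp), h]

lemma rem_stt_n (j : Fin n) : (stt s n).rem j = 0 := by
  rcases avail_card s n with hemp | hcard
  · have : j ∉ availF (stt s n) := by rw [hemp]; simp
    rw [mem_availF] at this
    have h0 := (inv_stt s n).1 j
    linarith [not_lt.1 this]
  · have : availF (stt s n) = ∅ := Finset.card_eq_zero.1 (by omega)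
    have hj : j ∉ availF (stt s n) := by rw [this]; simp
    rw [mem_availF] at hj
    have h0 := (inv_stt s n).1 j
    linarith [not_lt.1 hj]


open Classical in
noncomputable def exh (s : Fin n → (Fin n ≃ Fin n)) (j : Fin n) : ℕ :=
  Nat.find (⟨n, le_of_eq (rem_stt_n s j)⟩ : ∃ k, (stt s k).rem j ≤ 0)

open Classical in
lemma exh_le_n (j : Fin n) : exh s j ≤ n :=
  Nat.find_min' _ (le_of_eq (rem_stt_n s j))

open Classical in
lemma rem_exh_le (j : Fin n) : (stt s (exh s j)).rem j ≤ 0 :=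
  Nat.find_spec (⟨n, le_of_eq (rem_stt_n s j)⟩ : ∃ k, (stt s k).rem j ≤ 0)

open Classical in
lemma rem_pos_of_lt_exh {k : ℕ} {j : Fin n} (hk : k < exh s j) :
    0 < (stt s k).rem j :=
  not_le.1 (Nat.find_min _ hk)

lemma rem_eq_zero_of_exh_le {k : ℕ} {j : Fin n} (hk : exh s j ≤ k) :
    (stt s k).rem j = 0 :=
  le_antisymm (le_trans (rem_mono s hk j) (rem_exh_le s j)) ((inv_stt s k).1 j)

noncomputable def Ftime (s : Fin n → (Fin n ≃ Fin n)) (j : Fin n) : ℝ :=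
  (stt s (exh s j)).time

lemma Ftime_nonneg (j : Fin n) : 0 ≤ Ftime s j := (inv_stt s (exh s j)).2.2.2.2

lemma time_stt_zero : (stt s 0).time = 0 := rfl

lemma sum_cons_item (k : ℕ) (j : Fin n) :
    ∑ i, (stt s k).cons i j = 1 - (stt s k).rem j := by
  have := (inv_stt s k).2.2.1 j
  linarith

lemma sum_cons_exh {k : ℕ} {j : Fin n} (hk : exh s j ≤ k) :
    ∑ i, (stt s k).cons i j = 1 := by
  rw [sum_cons_item, rem_eq_zero_of_exh_le s hk, sub_zero]

lemma sum_cons_le_n_time (k : ℕ) (j : Fin n) :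
    ∑ i, (stt s k).cons i j ≤ (n : ℝ) * (stt s k).time := by
  induction k with
  | zero =>
    simp [stt_zero, initState]
  | succ k ih =>
    rw [stt_succ]
    by_cases h : (availF (stt s k)).Nonempty
    · have hsum : ∑ i, (psStep s (stt s k)).cons i j
          = (∑ i, (stt s k).cons i j) + (rateF s (stt s k) h j : ℝ) * delF s (stt s k) h := by
        simp only [cons_psStep s _ h]
        rw [Finset.sum_add_distrib, sum_agents_ite s _ h j]
      rw [hsum, time_psStep s _ h]
      have hrate : (rateF s (stt s k) h j : ℝ) ≤ (n : ℝ) := by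
        exact_mod_cast rateF_le s (stt s k) h j
      have hdel := delF_pos s (stt s k) h
      nlinarith
    · rw [psStep_frozen s _ h]
      exact ih

lemma one_le_n_Ftime (j : Fin n) : 1 ≤ (n : ℝ) * Ftime s j := by
  have h1 : ∑ i, (stt s (exh s j)).cons i j = 1 := sum_cons_exh s (le_refl _)
  have h2 := sum_cons_le_n_time s (exh s j) j
  rw [h1] at h2
  exact h2

lemma n_time_eq (k : ℕ) :
    (n : ℝ) * (stt s k).time = ∑ j, (1 - (stt s k).rem j) := by
  have h1 : ∀ i : Fin n, ∑ j, (stt s k).cons i j = (stt s k).time := (inv_stt s k).2.2.2.1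
  have : ∑ i : Fin n, ∑ j, (stt s k).cons i j = ∑ i : Fin n, (stt s k).time := by
    exact Finset.sum_congr rfl (fun i _ => h1 i)
  rw [Finset.sum_comm] at this
  have h2 : ∀ j : Fin n, ∑ i, (stt s k).cons i j = 1 - (stt s k).rem j := sum_cons_item s k
  rw [Finset.sum_congr rfl (fun j _ => h2 j)] at this
  rw [this]
  simp [mul_comm]

lemma time_le_one (k : ℕ) (hn : 0 < n) : (stt s k).time ≤ 1 := by
  have h := n_time_eq s k
  have hbound : ∑ j : Fin n, (1 - (stt s k).rem j) ≤ (n : ℝ) := by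
    calc ∑ j : Fin n, (1 - (stt s k).rem j) ≤ ∑ j : Fin n, (1:ℝ) := by
          refine Finset.sum_le_sum (fun j _ => ?_)
          have := (inv_stt s k).1 j
          linarith
      _ = (n : ℝ) := by simp
  have hnpos : (0:ℝ) < (n:ℝ) := by exact_mod_cast hn
  nlinarith
  
lemma Ftime_le_one (j : Fin n) (hn : 0 < n) : Ftime s j ≤ 1 := time_le_one s _ hn

lemma time_lt_succ_of_active {k : ℕ} (h : (availF (stt s k)).Nonempty) :
    (stt s k).time < (stt s (k+1)).time := by
  rw [stt_succ, time_psStep s _ h]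
  linarith [delF_pos s _ h]

lemma cons_stops {k : ℕ} {j : Fin n} (a : Fin n) (hk : exh s j ≤ k) :
    (stt s k).cons a j = (stt s (exh s j)).cons a j := by
  induction k with
  | zero =>
    have : exh s j = 0 := Nat.le_zero.1 hk
    rw [this]
  | succ k ih =>
    rcases Nat.lt_or_ge (exh s j) (k+1) with hl | hl
    · have hke : exh s j ≤ k := Nat.lt_succ_iff.1 hl
      rw [stt_succ, cons_psStep_of_not_avail s _ a j, ih hke]
      rw [mem_availF, rem_eq_zero_of_exh_le s hke]
      simp
    · have : exh s j = k + 1 := le_antisymm hk hl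
      rw [this]

lemma eats_from (a j : Fin n) (k0 : ℕ) (hk0 : k0 ≤ exh s j)
    (hb : ∀ j', (s a).symm j' < (s a).symm j → exh s j' ≤ k0) :
    (stt s (exh s j)).time - (stt s k0).time ≤
      (stt s (exh s j)).cons a j - (stt s k0).cons a j := by
  have key : ∀ k, k0 ≤ k → k ≤ exh s j →
      (stt s k).time - (stt s k0).time ≤ (stt s k).cons a j - (stt s k0).cons a j := by
    intro k
    induction k with
    | zero =>
      intro h1 _
      have : k0 = 0 := Nat.le_zero.1 h1
      subst this; simp
    | succ k ih =>
      intro h1 h2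
      rcases Nat.lt_or_ge k0 (k+1) with hl | hl
      · have hk0k : k0 ≤ k := Nat.lt_succ_iff.1 hl
        have hkexh : k < exh s j := h2
        have hactive : (availF (stt s k)).Nonempty := by
          refine ⟨j, ?_⟩
          rw [mem_availF]
          exact rem_pos_of_lt_exh s hkexh
        have htop : topF s (stt s k) hactive a = j := by
          refine topF_eq s _ hactive a j ?_ ?_
          · rw [mem_availF]; exact rem_pos_of_lt_exh s hkexh
          · intro j' hj'
            by_contra hlt
            push_neg at hlt
            have hexh' : exh s j' ≤ k0 := hb j' hlt
            have : (stt s k).rem j' = 0 := rem_eq_zero_of_exh_le s (le_trans hexh' hk0k)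
            rw [mem_availF, this] at hj'
            exact lt_irrefl 0 hj'
        have hcons : (stt s (k+1)).cons a j = (stt s k).cons a j + delF s (stt s k) hactive := by
          rw [stt_succ, cons_psStep s _ hactive, if_pos htop]
        have htime : (stt s (k+1)).time = (stt s k).time + delF s (stt s k) hactive := by
          rw [stt_succ, time_psStep s _ hactive]
        have := ih hk0k (le_of_lt hkexh)
        rw [hcons, htime]
        linarith
      · have : k0 = k + 1 := le_antisymm h1 hl
        subst this; simp
  exact key _ hk0 (le_refl _)

open Classical in
lemma firstEat (a j : Fin n) (hpos : 0 < (stt s n).cons a j) :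
    ∃ k, k < exh s j ∧ (∀ j', (s a).symm j' < (s a).symm j → exh s j' ≤ k) ∧
      (stt s n).cons a j ≤ Ftime s j - (stt s k).time := by
  have hex : ∃ k, 0 < (stt s (k+1)).cons a j := by
    refine ⟨n, lt_of_lt_of_le hpos (cons_mono s (Nat.le_succ n) a j)⟩
  set kh := Nat.find hex with hkh
  have hspec : 0 < (stt s (kh+1)).cons a j := Nat.find_spec hex
  have hzero : ∀ k, k ≤ kh → (stt s k).cons a j = 0 := by
    intro k hk
    induction k with
    | zero => simp [stt_zero, initState]
    | succ k ih =>
      have hklt : k < kh := hk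
      have := Nat.find_min hex hklt
      exact le_antisymm (not_lt.1 this) ((inv_stt s (k+1)).2.1 a j)
  have hconskh : (stt s kh).cons a j = 0 := hzero kh (le_refl _)
  have hactive : (availF (stt s kh)).Nonempty := by
    by_contra hfroz
    rw [stt_succ, psStep_frozen s _ hfroz, hconskh] at hspec
    exact lt_irrefl 0 hspec
  have htop : topF s (stt s kh) hactive a = j := by
    by_contra htop
    rw [stt_succ, cons_psStep s _ hactive, if_neg htop, add_zero, hconskh] at hspec
    exact lt_irrefl 0 hspec
  have hjavail : j ∈ availF (stt s kh) := htop ▸ (topF_spec s _ hactive a).1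
  have hkhexh : kh < exh s j := by
    by_contra hge
    push_neg at hge
    rw [mem_availF, rem_eq_zero_of_exh_le s hge] at hjavail
    exact lt_irrefl 0 hjavail
  refine ⟨kh, hkhexh, ?_, ?_⟩
  · intro j' hj'
    by_contra hgt
    push_neg at hgt
    have hj'avail : j' ∈ availF (stt s kh) := by
      rw [mem_availF]
      exact rem_pos_of_lt_exh s hgt
    have := (topF_spec s _ hactive a).2 j' hj'avail
    rw [htop] at this
    exact absurd this (not_le.2 hj')
  · have h1 : (stt s n).cons a j = (stt s (exh s j)).cons a j :=
      cons_stops s a (exh_le_n s j)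
    have h2 : (stt s (exh s j)).cons a j - (stt s kh).cons a j ≤
        (stt s (exh s j)).time - (stt s kh).time :=
      cons_sub_le_time_sub s (le_of_lt hkhexh) a j
    rw [hconskh] at h2
    rw [h1, Ftime]
    linarith

/-- Any agent's total consumption of `j` is at most `Ftime s j`. -/
lemma cons_le_Ftime (a j : Fin n) : (stt s n).cons a j ≤ Ftime s j := by
  have h1 : (stt s n).cons a j = (stt s (exh s j)).cons a j :=
    cons_stops s a (exh_le_n s j)
  have h2 : (stt s (exh s j)).cons a j - (stt s 0).cons a j ≤
      (stt s (exh s j)).time - (stt s 0).time :=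
    cons_sub_le_time_sub s (Nat.zero_le _) a j
  have h3 : (stt s 0).cons a j = 0 := by simp [stt_zero, initState]
  have h4 : (stt s 0).time = 0 := rfl
  rw [h1, Ftime]
  rw [h3, h4] at h2
  linarith

lemma cons_of_rank_zero (a j : Fin n) (hr : ∀ r : Fin n, (s a).symm j ≤ r) :
    Ftime s j ≤ (stt s n).cons a j := by
  have h := eats_from s a j 0 (Nat.zero_le _) (fun j' hj' =>
    absurd hj' (not_lt.2 (hr _)))
  have h3 : (stt s 0).cons a j = 0 := by simp [stt_zero, initState]
  have h4 : (stt s 0).time = 0 := rfl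
  rw [h3, h4] at h
  have h1 : (stt s n).cons a j = (stt s (exh s j)).cons a j :=
    cons_stops s a (exh_le_n s j)
  rw [h1, Ftime]
  linarith

open Classical in
lemma card_early_items (t : ℝ) (ht : 0 ≤ t) :
    ((Finset.univ.filter (fun j : Fin n => Ftime s j ≤ t)).card : ℝ) ≤ (n : ℝ) * t := by
  set P : ℕ → Prop := fun k => (stt s k).time ≤ t with hP
  have hbase : P 0 := by simpa [hP, time_stt_zero] using ht
  set kstar := Nat.findGreatest P n with hks
  have hkstar : P kstar := Nat.findGreatest_spec (Nat.zero_le _) hbase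
  have hmem : ∀ j ∈ Finset.univ.filter (fun j : Fin n => Ftime s j ≤ t),
      exh s j ≤ kstar := by
    intro j hj
    rw [Finset.mem_filter] at hj
    exact Nat.le_findGreatest (exh_le_n s j) hj.2
  have hcard : ((Finset.univ.filter (fun j : Fin n => Ftime s j ≤ t)).card : ℝ)
      = ∑ j ∈ Finset.univ.filter (fun j : Fin n => Ftime s j ≤ t),
          ∑ i, (stt s kstar).cons i j := by
    rw [Finset.sum_congr rfl (fun j hj => sum_cons_exh s (hmem j hj))]
    simp
  rw [hcard]
  calc ∑ j ∈ Finset.univ.filter (fun j : Fin n => Ftime s j ≤ t),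
          ∑ i, (stt s kstar).cons i j
      ≤ ∑ j : Fin n, ∑ i, (stt s kstar).cons i j := by
        refine Finset.sum_le_sum_of_subset_of_nonneg (Finset.filter_subset _ _) ?_
        intro j _ _
        exact Finset.sum_nonneg (fun i _ => (inv_stt s kstar).2.1 i j)
    _ = (n : ℝ) * (stt s kstar).time := by
        rw [Finset.sum_congr rfl (fun j _ => sum_cons_item s kstar j), ← n_time_eq]
    _ ≤ (n : ℝ) * t := by
        exact mul_le_mul_of_nonneg_left hkstar (Nat.cast_nonneg _)


open Classical in
lemma Ftime_comparison (s : Fin n → (Fin n ≃ Fin n)) (i : Fin n) (s' : Fin n ≃ Fin n) :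
    ∀ j : Fin n, Ftime s j ≤ 2 * Ftime (Function.update s i s') j := by
  set q := Function.update s i s' with hq
  by_contra hcon
  push_neg at hcon
  have hS : (Finset.univ.filter (fun j : Fin n => 2 * Ftime q j < Ftime s j)).Nonempty := by
    obtain ⟨j, hj⟩ := hcon
    exact ⟨j, by simp [hj]⟩
  obtain ⟨j, hjS, hjmin⟩ := Finset.exists_min_image _ (Ftime q) hS
  rw [Finset.mem_filter] at hjS
  have hviol : 2 * Ftime q j < Ftime s j := hjS.2
  have hn : 0 < n := j.pos
  set τ := Ftime q j with hτ
  have hmin : ∀ k : Fin n, Ftime q k < τ → Ftime s k ≤ 2 * Ftime q k := by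
    intro k hk
    by_contra hk2
    push_neg at hk2
    have : k ∈ Finset.univ.filter (fun j : Fin n => 2 * Ftime q j < Ftime s j) := by
      simp [hk2]
    exact absurd (hjmin k this) (not_le.2 hk)
  set H := Finset.univ.filter (fun a : Fin n => a ≠ i ∧ 0 < (stt q n).cons a j) with hH
  -- total consumption of j by members of H in the q-run
  have hsumq : ∑ a ∈ H, (stt q n).cons a j = 1 - (stt q n).cons i j := by
    have htot : ∑ a, (stt q n).cons a j = 1 := sum_cons_exh q (exh_le_n q j)
    have herase : ∑ a ∈ Finset.univ.erase i, (stt q n).cons a j + (stt q n).cons i j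
        = ∑ a, (stt q n).cons a j := Finset.sum_erase_add _ _ (Finset.mem_univ i)
    have hHsub : H ⊆ Finset.univ.erase i := by
      intro a ha
      rw [hH, Finset.mem_filter] at ha
      exact Finset.mem_erase.2 ⟨ha.2.1, Finset.mem_univ a⟩
    have hHsum : ∑ a ∈ H, (stt q n).cons a j
        = ∑ a ∈ Finset.univ.erase i, (stt q n).cons a j := by
      refine Finset.sum_subset hHsub ?_
      intro a ha haH
      rw [hH, Finset.mem_filter] at haH
      push_neg at haH
      have hane : a ≠ i := (Finset.mem_erase.1 ha).1
      have := haH (Finset.mem_univ a) hane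
      exact le_antisymm this ((inv_stt q n).2.1 a j)
    rw [hHsum]
    linarith
  have hconsi : (stt q n).cons i j ≤ τ := cons_le_Ftime q i j
  -- pointwise inequality for members of H
  have per_a : ∀ a ∈ H, (Ftime s j - 2*τ) + 2*((stt q n).cons a j) ≤ (stt s n).cons a j := by
    intro a ha
    rw [hH, Finset.mem_filter] at ha
    obtain ⟨-, hai, hpos⟩ := ha
    obtain ⟨ka, hka_lt, hbetter, hconsa⟩ := firstEat q a j hpos
    set σa := (stt q ka).time with hσ
    have hσ0 : 0 ≤ σa := (inv_stt q ka).2.2.2.2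
    have hσlt : σa < τ := by
      have h1 : (stt q ka).time < (stt q (ka+1)).time := by
        refine time_lt_succ_of_active q ⟨j, ?_⟩
        rw [mem_availF]
        exact rem_pos_of_lt_exh q hka_lt
      have h2 : (stt q (ka+1)).time ≤ (stt q (exh q j)).time := time_mono q hka_lt
      rw [hτ, Ftime]
      linarith
    have hqa : q a = s a := Function.update_of_ne hai _ _
    -- all items preferred by a to j are exhausted in the s-run by time 2*σa
    have hbetterS : ∀ j', (s a).symm j' < (s a).symm j → Ftime s j' ≤ 2 * σa := by
      intro j' hj'
      have hexhq : exh q j' ≤ ka := hbetter j' (by rw [hqa]; exact hj')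
      have hFq : Ftime q j' ≤ σa := by
        rw [Ftime]
        exact time_mono q hexhq
      have : Ftime s j' ≤ 2 * Ftime q j' := hmin j' (lt_of_le_of_lt hFq hσlt)
      linarith
    -- a phase k0 of the s-run at which all better items are exhausted
    set B := Finset.univ.filter (fun j' : Fin n => (s a).symm j' < (s a).symm j) with hB
    set k0 := B.sup (exh s) with hk0
    have hk0time : (stt s k0).time ≤ 2 * σa := by
      rcases B.eq_empty_or_nonempty with hBe | hBne
      · rw [hk0, hBe, Finset.sup_empty]
        have : (stt s (⊥ : ℕ)).time = 0 := rfl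
        rw [this]
        linarith
      · obtain ⟨j'', hj''B, hj''⟩ := Finset.exists_mem_eq_sup B hBne (exh s)
        rw [hk0, hj'']
        rw [hB, Finset.mem_filter] at hj''B
        exact hbetterS j'' hj''B.2
    have hk0le : k0 ≤ exh s j := by
      by_contra hgt
      push_neg at hgt
      have : Ftime s j ≤ (stt s k0).time := time_mono s (le_of_lt hgt)
      linarith
    have hexhk0 : ∀ j', (s a).symm j' < (s a).symm j → exh s j' ≤ k0 := by
      intro j' hj'
      exact Finset.le_sup (by rw [hB]; simp [hj'])
    have heats := eats_from s a j k0 hk0le hexhk0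
    have hcons0 : 0 ≤ (stt s k0).cons a j := (inv_stt s k0).2.1 a j
    have hmonoc : (stt s (exh s j)).cons a j ≤ (stt s n).cons a j :=
      cons_mono s (exh_le_n s j) a j
    have hFs : Ftime s j - 2 * σa ≤ (stt s n).cons a j := by
      have : (stt s (exh s j)).time = Ftime s j := rfl
      nlinarith [heats]
    -- combine with consumption bound in the q-run
    have hq2 : (stt q n).cons a j ≤ τ - σa := hconsa
    linarith
  -- sum the pointwise inequalities over H
  have hsum_le : ∑ a ∈ H, ((Ftime s j - 2*τ) + 2*((stt q n).cons a j))
      ≤ ∑ a ∈ H, (stt s n).cons a j := Finset.sum_le_sum per_a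
  have hsumS_le : ∑ a ∈ H, (stt s n).cons a j ≤ 1 := by
    have htot : ∑ a, (stt s n).cons a j = 1 := sum_cons_exh s (exh_le_n s j)
    calc ∑ a ∈ H, (stt s n).cons a j ≤ ∑ a, (stt s n).cons a j := by
          refine Finset.sum_le_sum_of_subset_of_nonneg (Finset.subset_univ H) ?_
          intro a _ _
          exact (inv_stt s n).2.1 a j
      _ = 1 := htot
  have hexpand : ∑ a ∈ H, ((Ftime s j - 2*τ) + 2*((stt q n).cons a j))
      = (H.card : ℝ) * (Ftime s j - 2*τ) + 2 * (1 - (stt q n).cons i j) := by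
    rw [Finset.sum_add_distrib, Finset.sum_const, ← Finset.mul_sum, hsumq, nsmul_eq_mul]
  have hcard0 : (0:ℝ) ≤ (H.card : ℝ) * (Ftime s j - 2*τ) := by
    have : (0:ℝ) ≤ Ftime s j - 2*τ := by linarith
    exact mul_nonneg (Nat.cast_nonneg _) this
  have hτhalf : 1/2 ≤ τ := by
    rw [hexpand] at hsum_le
    linarith
  have hF1 : Ftime s j ≤ 1 := Ftime_le_one s j hn
  linarith

end PSdev

namespace PSdev

lemma psFinal_eq_stt {n : ℕ} (s : Fin n → (Fin n ≃ Fin n)) : psFinal s = stt s n := rfl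

lemma psProb_nonneg {n : ℕ} (s : Fin n → (Fin n ≃ Fin n)) (i j : Fin n) :
    0 ≤ psProb s i j := by
  rw [psProb, psFinal_eq_stt]
  exact (inv_stt s n).2.1 i j

open Classical in
theorem main :
    ∃ C : ℝ, 0 < C ∧
      ∀ (n : ℕ) (u : Fin n → Fin n → ℝ) (s : Fin n → (Fin n ≃ Fin n)),
        (∀ i, UnitRange (u i)) → PSNash u s →
        SWopt u ≤ C * Real.sqrt n * psSW u s := by
  refine ⟨3, by norm_num, ?_⟩
  intro n u s hu hnash
  rcases Nat.eq_zero_or_pos n with hn0 | hn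
  · subst hn0
    have h1 : SWopt u ≤ 0 := by
      refine Finset.sup'_le _ _ (fun μ _ => ?_)
      simp
    have h2 : psSW u s = 0 := by
      rw [psSW]
      simp
    rw [h2]
    simpa using h1
  -- notation
  have hu0 : ∀ i j, 0 ≤ u i j := fun i j => ((hu i).1 j).1
  have hu1 : ∀ i j, u i j ≤ 1 := fun i j => ((hu i).1 j).2
  set U : Fin n → ℝ := fun i => ∑ j, psProb s i j * u i j with hU
  have hUnn : ∀ i, 0 ≤ U i := fun i =>
    Finset.sum_nonneg (fun j _ => mul_nonneg (psProb_nonneg s i j) (hu0 i j))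
  have hW : psSW u s = ∑ i, U i := rfl
  -- the deviation bound
  have hdev : ∀ i j : Fin n, Ftime (Function.update s i (Equiv.swap ⟨0, hn⟩ j)) j * u i j
      ≤ U i := by
    intro i j
    set s' : Fin n ≃ Fin n := Equiv.swap (⟨0, hn⟩ : Fin n) j with hs'
    set q := Function.update s i s' with hq2
    have hnash' := hnash i s'
    have hrank : ∀ r : Fin n, (q i).symm j ≤ r := by
      intro r
      have : q i = s' := Function.update_self i s' s
      rw [this, hs', Equiv.symm_swap, Equiv.swap_apply_right]
      exact Fin.mk_le_of_le_val (Nat.zero_le _)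
    have hcons : Ftime q j ≤ psProb q i j := by
      rw [psProb, psFinal_eq_stt]
      exact cons_of_rank_zero q i j hrank
    have hterm : Ftime q j * u i j ≤ psProb q i j * u i j :=
      mul_le_mul_of_nonneg_right hcons (hu0 i j)
    have hsum : psProb q i j * u i j ≤ ∑ j', psProb q i j' * u i j' := by
      refine Finset.single_le_sum (f := fun j' => psProb q i j' * u i j') ?_ (Finset.mem_univ j)
      intro j' _
      exact mul_nonneg (psProb_nonneg q i j') (hu0 i j')
    exact le_trans hterm (le_trans hsum hnash')
  have keyA : ∀ i j : Fin n, u i j * Ftime s j ≤ 2 * U i := by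
    intro i j
    have hcomp := Ftime_comparison s i (Equiv.swap ⟨0, hn⟩ j) j
    have hdev' := hdev i j
    have h1 : u i j * Ftime s j ≤ u i j * (2 * Ftime (Function.update s i (Equiv.swap ⟨0, hn⟩ j)) j) :=
      mul_le_mul_of_nonneg_left hcomp (hu0 i j)
    nlinarith [hu0 i j]
  have keyB : ∀ i j : Fin n, u i j ≤ (n : ℝ) * U i := by
    intro i j
    have hF := one_le_n_Ftime (Function.update s i (Equiv.swap ⟨0, hn⟩ j)) j
    have hdev' := hdev i j
    nlinarith [hu0 i j]
  -- psSW is at least 1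
  have hW1 : 1 ≤ psSW u s := by
    have hUi : ∀ i, 1 ≤ (n:ℝ) * U i := by
      intro i
      obtain ⟨j1, hj1⟩ := (hu i).2.1
      have := keyB i j1
      rw [hj1] at this
      exact this
    have hnpos : (0:ℝ) < (n:ℝ) := by exact_mod_cast hn
    have : (n:ℝ) * 1 ≤ (n:ℝ) * psSW u s := by
      rw [hW]
      calc (n:ℝ) * 1 = ∑ _i : Fin n, (1:ℝ) := by simp
        _ ≤ ∑ i, (n:ℝ) * U i := Finset.sum_le_sum (fun i _ => hUi i)
        _ = (n:ℝ) * ∑ i, U i := by rw [Finset.mul_sum]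
    exact le_of_mul_le_mul_left (by linarith) hnpos
  -- bound the optimal welfare
  have hsqrt : Real.sqrt n * Real.sqrt n = (n:ℝ) := Real.mul_self_sqrt (Nat.cast_nonneg n)
  have hsqrtpos : 0 < Real.sqrt n := Real.sqrt_pos.2 (by exact_mod_cast hn)
  set t : ℝ := (Real.sqrt n)⁻¹ with ht
  have htpos : 0 < t := inv_pos.2 hsqrtpos
  refine Finset.sup'_le _ _ (fun μ _ => ?_)
  set A := Finset.univ.filter (fun i : Fin n => t < Ftime s (μ i)) with hA
  have hsplit : ∑ i, u i (μ i) = ∑ i ∈ A, u i (μ i) +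
      ∑ i ∈ Finset.univ.filter (fun i : Fin n => ¬ t < Ftime s (μ i)), u i (μ i) :=
    (Finset.sum_filter_add_sum_filter_not _ _ _).symm
  have hAbound : ∑ i ∈ A, u i (μ i) ≤ 2 * Real.sqrt n * psSW u s := by
    have hterm : ∀ i ∈ A, u i (μ i) ≤ Real.sqrt n * (2 * U i) := by
      intro i hi
      rw [hA, Finset.mem_filter] at hi
      have hFt : t < Ftime s (μ i) := hi.2
      have h1 : u i (μ i) * 1 ≤ u i (μ i) * (Real.sqrt n * Ftime s (μ i)) := by
        refine mul_le_mul_of_nonneg_left ?_ (hu0 i (μ i))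
        have : Real.sqrt n * t = 1 := by
          rw [ht]
          field_simp
        nlinarith
      have h2 := keyA i (μ i)
      nlinarith [hsqrtpos.le]
    calc ∑ i ∈ A, u i (μ i) ≤ ∑ i ∈ A, Real.sqrt n * (2 * U i) :=
          Finset.sum_le_sum hterm
      _ ≤ ∑ i : Fin n, Real.sqrt n * (2 * U i) := by
          refine Finset.sum_le_sum_of_subset_of_nonneg (Finset.subset_univ A) ?_
          intro i _ _
          exact mul_nonneg hsqrtpos.le (by linarith [hUnn i])
      _ = 2 * Real.sqrt n * psSW u s := by
          rw [hW, Finset.mul_sum]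
          refine Finset.sum_congr rfl (fun i _ => by ring)
  have hBbound : ∑ i ∈ Finset.univ.filter (fun i : Fin n => ¬ t < Ftime s (μ i)), u i (μ i)
      ≤ Real.sqrt n * psSW u s := by
    set Bc := Finset.univ.filter (fun i : Fin n => ¬ t < Ftime s (μ i)) with hBc
    have h1 : ∑ i ∈ Bc, u i (μ i) ≤ (Bc.card : ℝ) := by
      calc ∑ i ∈ Bc, u i (μ i) ≤ ∑ _i ∈ Bc, (1:ℝ) :=
            Finset.sum_le_sum (fun i _ => hu1 i (μ i))
        _ = (Bc.card : ℝ) := by simp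
    have h2 : Bc.card ≤ (Finset.univ.filter (fun j : Fin n => Ftime s j ≤ t)).card := by
      refine Finset.card_le_card_of_injOn (fun i => μ i) ?_ ?_
      · intro i hi
        simp only [hBc, Finset.mem_coe, Finset.mem_filter] at hi
        rw [Finset.mem_coe, Finset.mem_filter]
        exact ⟨Finset.mem_univ _, not_lt.1 hi.2⟩
      · intro a _ b _ hab
        exact μ.injective hab
    have h3 := card_early_items s t htpos.le
    have h4 : (n:ℝ) * t = Real.sqrt n := by
      rw [ht, eq_comm, eq_mul_inv_iff_mul_eq₀ hsqrtpos.ne']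
      exact hsqrt
    have h5 : (Bc.card : ℝ) ≤ Real.sqrt n := by
      rw [← h4]
      exact le_trans (by exact_mod_cast h2) h3
    calc ∑ i ∈ Bc, u i (μ i) ≤ Real.sqrt n := le_trans h1 h5
      _ = Real.sqrt n * 1 := by ring
      _ ≤ Real.sqrt n * psSW u s := mul_le_mul_of_nonneg_left hW1 hsqrtpos.le
  rw [hsplit]
  calc ∑ i ∈ A, u i (μ i) +
      ∑ i ∈ Finset.univ.filter (fun i : Fin n => ¬ t < Ftime s (μ i)), u i (μ i)
      ≤ 2 * Real.sqrt n * psSW u s + Real.sqrt n * psSW u s := add_le_add hAbound hBbound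
    _ = 3 * Real.sqrt n * psSW u s := by ring

end PSdev

/-- Under the unit-range representation, the pure Price of Anarchy of
Probabilistic Serial is `O(√n)`: there is a universal constant `C > 0` such that
for every `n`, every profile `u` of unit-range valuations and every pure Nash
equilibrium `s` of Probabilistic Serial at `u`,
`SW_OPT(u) ≤ C · √n · SW_PS(u, s)`. -/
theorem ps_pure_poa_sqrt_n_unit_range :
    ∃ C : ℝ, 0 < C ∧
      ∀ (n : ℕ) (u : Fin n → Fin n → ℝ) (s : Fin n → (Fin n ≃ Fin n)),
        (∀ i, UnitRange (u i)) → PSNash u s →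
        SWopt u ≤ C * Real.sqrt n * psSW u s :=
  PSdev.main
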